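/- Let M ⊆ ℝⁿ be nonempty, closed and convex, and let {z^k} ⊆ ℝⁿ be Fejér monotone with respect to M. If the scalar sequence {dist(z^k, M)} converges Q-linearly to 0, i.e. limsup_{k→∞} dist(z^{k+1}, M)/dist(z^k, M) < 1 (with dist(z^k, M) > 0 for all k), then {z^k} converges R-linearly to a point z̄ ∈ M, i.e. z^k → z̄ ∈ M and limsup_{k→∞} ‖z^k − z̄‖^{1/k} < 1. -/

import Mathlib

noncomputable section

open Filter Metric RealInnerProductSpace

/-- Euclidean space ℝⁿ. -/
abbrev Euc (n : ℕ) := EuclideanSpace ℝ (Fin n)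

/-- `P` is the metric projection onto `A`: `P x` is a point of `A` nearest to `x`. -/
def IsProjection {n : ℕ} (A : Set (Euc n)) (P : Euc n → Euc n) : Prop :=
  ∀ x, P x ∈ A ∧ ∀ a ∈ A, ‖x - P x‖ ≤ ‖x - a‖

/-- Reflection `R_A = 2 P_A - Id`, given the projection `P = P_A`. -/
def reflect {n : ℕ} (P : Euc n → Euc n) (x : Euc n) : Euc n := (2 : ℝ) • P x - x

/-- `Z̄_{A,B} = Z̃_{A,B} ∘ Z_{A,B}`, where `Z_{A,B} = P_A ∘ P_B` and
`Z̃_{A,B} = (1/2)(P_A + P_B)`. -/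
def Zbar {n : ℕ} (PA PB : Euc n → Euc n) (x : Euc n) : Euc n :=
  (2⁻¹ : ℝ) • (PA (PA (PB x)) + PB (PA (PB x)))

/-- `c` is the circumcenter of `w`, `R_A w`, `R_B w`: it lies in the affine hull of these
three points and is equidistant from them. -/
def IsCircumcenter {n : ℕ} (PA PB : Euc n → Euc n) (w c : Euc n) : Prop :=
  c ∈ affineSpan ℝ ({w, reflect PA w, reflect PB w} : Set (Euc n)) ∧
    ‖c - w‖ = ‖c - reflect PA w‖ ∧ ‖c - w‖ = ‖c - reflect PB w‖

/-- If a Fejér monotone sequence with respect to a nonempty closed convex set `M` is such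
that `dist(z^k, M)` converges Q-linearly to `0`, then `z^k` converges R-linearly to a
point of `M`. -/
theorem stmt10 {n : ℕ} (M : Set (Euc n))
    (hMne : M.Nonempty) (hMcl : IsClosed M) (hMcv : Convex ℝ M)
    (z : ℕ → Euc n)
    (hFejer : ∀ s ∈ M, ∀ k : ℕ, ‖z (k + 1) - s‖ ≤ ‖z k - s‖)
    (hpos : ∀ k : ℕ, 0 < infDist (z k) M)
    (hQlin : limsup (fun k => infDist (z (k + 1)) M / infDist (z k) M) atTop < 1) :
    ∃ zbar ∈ M, Tendsto z atTop (nhds zbar) ∧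
      limsup (fun k : ℕ => ‖z k - zbar‖ ^ (1 / (k : ℝ))) atTop < 1 := by
  classical
  have proj : ∀ x : Euc n, ∃ y ∈ M, infDist x M = dist x y := fun x =>
    hMcl.exists_infDist_eq_dist hMne x
  set d : ℕ → ℝ := fun k => infDist (z k) M with hd
  have hdmono : ∀ k, d (k + 1) ≤ d k := by
    intro k
    obtain ⟨y, hyM, hy⟩ := proj (z k)
    calc d (k + 1) ≤ dist (z (k + 1)) y := infDist_le_dist_of_mem hyM
      _ ≤ dist (z k) y := by rw [dist_eq_norm, dist_eq_norm]; exact hFejer y hyM k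
      _ = d k := hy.symm
  have hbound : ∀ k, d (k + 1) / d k ≤ 1 := fun k =>
    (div_le_one (hpos k)).2 (hdmono k)
  set L := limsup (fun k => d (k + 1) / d k) atTop with hL
  obtain ⟨q, hLq, hq1, hq0⟩ : ∃ q : ℝ, L < q ∧ q < 1 ∧ 0 < q := by
    refine ⟨(max L 0 + 1) / 2, ?_, ?_, ?_⟩
    · have h1 : L ≤ max L 0 := le_max_left _ _
      have : max L 0 < 1 := max_lt hQlin one_pos
      linarith
    · have : max L 0 < 1 := max_lt hQlin one_pos
      linarith
    · have : (0 : ℝ) ≤ max L 0 := le_max_right _ _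
      linarith
  have hev : ∀ᶠ k in atTop, d (k + 1) / d k < q :=
    eventually_lt_of_limsup_lt hLq (Filter.isBoundedUnder_of ⟨1, hbound⟩)
  obtain ⟨N, hN⟩ := eventually_atTop.1 hev
  have hgeo : ∀ m, d (N + m) ≤ d N * q ^ m := by
    intro m
    induction m with
    | zero => simp
    | succ m ih =>
      have h1 : d (N + m + 1) < q * d (N + m) :=
        (div_lt_iff₀ (hpos (N + m))).1 (hN (N + m) (Nat.le_add_right N m))
      calc d (N + (m + 1)) = d (N + m + 1) := by ring_nf
        _ ≤ q * d (N + m) := h1.le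
        _ ≤ q * (d N * q ^ m) := by
            exact mul_le_mul_of_nonneg_left ih hq0.le
        _ = d N * q ^ (m + 1) := by ring
  have hzd : ∀ k, dist (z k) (z (k + 1)) ≤ 2 * d k := by
    intro k
    obtain ⟨y, hyM, hy⟩ := proj (z k)
    have h2 : dist (z (k + 1)) y ≤ d k := by
      show dist (z (k + 1)) y ≤ infDist (z k) M
      rw [hy, dist_eq_norm, dist_eq_norm]; exact hFejer y hyM k
    calc dist (z k) (z (k + 1)) ≤ dist (z k) y + dist y (z (k + 1)) := dist_triangle _ _ _
      _ ≤ d k + d k := by rw [dist_comm y]; exact add_le_add hy.ge h2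
      _ = 2 * d k := by ring
  set w : ℕ → Euc n := fun m => z (m + N) with hw
  have hwgeo : ∀ m, dist (w m) (w (m + 1)) ≤ (2 * d N) * q ^ m := by
    intro m
    calc dist (w m) (w (m + 1)) = dist (z (m + N)) (z (m + N + 1)) := by
          simp only [hw]; ring_nf
      _ ≤ 2 * d (m + N) := hzd (m + N)
      _ ≤ 2 * (d N * q ^ m) := by
          have := hgeo m
          rw [Nat.add_comm N m] at this
          linarith
      _ = (2 * d N) * q ^ m := by ring
  have hwC : CauchySeq w := cauchySeq_of_le_geometric q (2 * d N) hq1 hwgeo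
  obtain ⟨zbar, hzbar⟩ := cauchySeq_tendsto_of_complete hwC
  have hztend : Tendsto z atTop (nhds zbar) := (tendsto_add_atTop_iff_nat N).1 hzbar
  -- d (N + m) → 0, so infDist zbar M = 0
  have hd0 : Tendsto (fun m => d (m + N)) atTop (nhds 0) := by
    have h1 : Tendsto (fun m : ℕ => d N * q ^ m) atTop (nhds 0) := by
      simpa using (tendsto_pow_atTop_nhds_zero_of_lt_one hq0.le hq1).const_mul (d N)
    refine squeeze_zero (fun m => (hpos _).le) (fun m => ?_) h1
    have := hgeo m; rwa [Nat.add_comm N m] at this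
  have hzbarM : zbar ∈ M := by
    have h1 : Tendsto (fun m => infDist (w m) M) atTop (nhds (infDist zbar M)) :=
      ((continuous_infDist_pt M).continuousAt.tendsto).comp hzbar
    have h2 : infDist zbar M = 0 := tendsto_nhds_unique h1 hd0
    exact (hMcl.mem_iff_infDist_zero hMne).2 h2
  refine ⟨zbar, hzbarM, hztend, ?_⟩
  -- distance bound to limit
  have hwdist : ∀ m, dist (w m) zbar ≤ (2 * d N) * q ^ m / (1 - q) :=
    dist_le_of_le_geometric_of_tendsto q (2 * d N) hq1 hwgeo hzbar
  set A : ℝ := (2 * d N / (1 - q)) / q ^ N + 1 with hA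
  have hAnn : 0 ≤ (2 * d N / (1 - q)) / q ^ N := by
    have h1 : 0 ≤ 2 * d N := by have := (hpos N).le; linarith
    have h2 : (0:ℝ) < 1 - q := by linarith
    exact div_nonneg (div_nonneg h1 h2.le) (pow_pos hq0 N).le
  have hApos : 0 < A := by rw [hA]; linarith
  have hzbnd : ∀ k, N ≤ k → ‖z k - zbar‖ ≤ A * q ^ k := by
    intro k hk
    obtain ⟨m, rfl⟩ := Nat.exists_eq_add_of_le hk
    have h1 : ‖z (N + m) - zbar‖ = dist (w m) zbar := by
      rw [dist_eq_norm, hw]; ring_nf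
    have h2 : (2 * d N) * q ^ m / (1 - q) = (2 * d N / (1 - q)) / q ^ N * q ^ (N + m) := by
      have hqN : (q : ℝ) ^ N ≠ 0 := (pow_pos hq0 N).ne'
      have h1q : (1 : ℝ) - q ≠ 0 := by intro h; linarith [hq1]
      rw [pow_add]; field_simp
    have h3 : (2 * d N / (1 - q)) / q ^ N * q ^ (N + m) ≤ A * q ^ (N + m) := by
      apply mul_le_mul_of_nonneg_right _ (pow_nonneg hq0.le _)
      rw [hA]; linarith
    rw [h1]
    calc dist (w m) zbar ≤ (2 * d N) * q ^ m / (1 - q) := hwdist m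
      _ ≤ A * q ^ (N + m) := by rw [h2]; exact h3
  -- pick q' between q and 1
  obtain ⟨q', hqq', hq'1⟩ : ∃ q' : ℝ, q < q' ∧ q' < 1 :=
    ⟨(q + 1) / 2, by linarith, by linarith⟩
  -- A^(1/k) * q → q
  have hAtend : Tendsto (fun k : ℕ => A ^ (1 / (k : ℝ)) * q) atTop (nhds q) := by
    have h1 : Tendsto (fun k : ℕ => (1 / (k : ℝ))) atTop (nhds 0) :=
      tendsto_one_div_atTop_nhds_zero_nat
    have h2 : Tendsto (fun k : ℕ => A ^ (1 / (k : ℝ))) atTop (nhds 1) := by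
      have hc : ContinuousAt (fun x : ℝ => A ^ x) 0 :=
        Real.continuousAt_const_rpow hApos.ne'
      have := hc.tendsto.comp h1
      simpa [Real.rpow_zero, Function.comp_def] using this
    simpa using h2.mul_const q
  have hevlt : ∀ᶠ k : ℕ in atTop, A ^ (1 / (k : ℝ)) * q < q' :=
    hAtend.eventually (eventually_lt_nhds hqq')
  have hevle : ∀ᶠ k : ℕ in atTop, ‖z k - zbar‖ ^ (1 / (k : ℝ)) ≤ A ^ (1 / (k : ℝ)) * q := by
    filter_upwards [eventually_ge_atTop N, eventually_ge_atTop 1] with k hkN hk1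
    have hkr : (0 : ℝ) < (k : ℝ) := by exact_mod_cast hk1
    have hinv : (0 : ℝ) ≤ 1 / (k : ℝ) := by positivity
    have h1 : ‖z k - zbar‖ ^ (1 / (k : ℝ)) ≤ (A * q ^ k) ^ (1 / (k : ℝ)) :=
      Real.rpow_le_rpow (norm_nonneg _) (hzbnd k hkN) hinv
    have h2 : (A * q ^ k) ^ (1 / (k : ℝ)) = A ^ (1 / (k : ℝ)) * q := by
      rw [Real.mul_rpow hApos.le (pow_nonneg hq0.le _)]
      congr 1
      rw [← Real.rpow_natCast q k, ← Real.rpow_mul hq0.le]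
      rw [mul_one_div, div_self hkr.ne', Real.rpow_one]
    rw [h2] at h1; exact h1
  have hfin : ∀ᶠ k : ℕ in atTop, ‖z k - zbar‖ ^ (1 / (k : ℝ)) ≤ q' := by
    filter_upwards [hevlt, hevle] with k h1 h2
    exact h2.trans h1.le
  have hcob : IsCoboundedUnder (· ≤ ·) atTop (fun k : ℕ => ‖z k - zbar‖ ^ (1 / (k : ℝ))) :=
    isCoboundedUnder_le_of_eventually_le atTop
      (Eventually.of_forall fun k => Real.rpow_nonneg (norm_nonneg _) _)
  exact lt_of_le_of_lt (limsup_le_of_le hcob hfin) hq'1
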